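/- Let G be a connected graph, X a minimum vertex cover of G, and ℓ, d integers. Suppose some vertex x° ∈ X is adjacent to a pendant (degree-one) vertex. If there exist X_s ⊆ X and Y_s ⊆ V(G)\X with (i) (X\X_s) ∪ Y_s a vertex cover of G, (ii) rank((X\X_s) ∪ Y_s) ≥ ℓ, and (iii) |Y_s| − |X_s| ≤ ℓ − d, then there exist X'_s ⊆ X and Y'_s ⊆ V(G)\X satisfying the same three conditions with x° ∉ X'_s. -/

import Mathlib

open SimpleGraph

/-- A set of vertices is a vertex cover if it meets every edge. -/
def IsVertexCover {V : Type*} (G : SimpleGraph V) (C : Set V) : Prop :=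
  ∀ ⦃u v : V⦄, G.Adj u v → u ∈ C ∨ v ∈ C

/-- The minimum vertex cover number of a graph. -/
noncomputable def vc {V : Type*} (G : SimpleGraph V) : ℕ :=
  sInf {n | ∃ C : Set V, _root_.IsVertexCover G C ∧ C.Finite ∧ Nat.card C = n}

/-- `X` is a minimum vertex cover of `G`. -/
def IsMinVertexCover {V : Type*} (G : SimpleGraph V) (X : Set V) : Prop :=
  _root_.IsVertexCover G X ∧ ∀ C : Set V, _root_.IsVertexCover G C → Nat.card X ≤ Nat.card C

/-- The rank of a graph: number of vertices minus number of connected components. -/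
noncomputable def grank {V : Type*} (G : SimpleGraph V) : ℕ :=
  Nat.card V - Nat.card G.ConnectedComponent

/-- The rank of a set of vertices: the rank of the induced subgraph. -/
noncomputable def srank {V : Type*} (G : SimpleGraph V) (S : Set V) : ℕ :=
  grank (G.induce S)

/-- The set of endpoints of a set of edges. -/
def edgeVerts {V : Type*} (F : Set (Sym2 V)) : Set V := {v | ∃ e ∈ F, v ∈ e}

/-- The setoid identifying the vertices connected through edges of `F`. -/
def contractSetoid {V : Type*} (F : Set (Sym2 V)) : Setoid V :=
  (SimpleGraph.fromEdgeSet F).reachableSetoid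

/-- The graph obtained from `G` by contracting all the edges in `F`. -/
def contract {V : Type*} (G : SimpleGraph V) (F : Set (Sym2 V)) :
    SimpleGraph (Quotient (contractSetoid F)) where
  Adj a b := a ≠ b ∧ ∃ u v : V, Quotient.mk (contractSetoid F) u = a ∧
    Quotient.mk (contractSetoid F) v = b ∧ G.Adj u v
  symm := by
    constructor
    rintro a b ⟨hab, u, v, hu, hv, h⟩
    exact ⟨hab.symm, v, u, hv, hu, h.symm⟩
  loopless := by constructor; rintro a ⟨h, -⟩; exact h rfl


lemma mycomp_le {V W : Type*} (G : SimpleGraph V) (H : SimpleGraph W) [Finite V]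
    (f : G →g H) (hf : Function.Surjective f) :
    Nat.card H.ConnectedComponent ≤ Nat.card G.ConnectedComponent := by
  apply Nat.card_le_card_of_surjective (SimpleGraph.ConnectedComponent.map f)
  intro c
  induction c using SimpleGraph.ConnectedComponent.ind with
  | _ w =>
    obtain ⟨v, rfl⟩ := hf w
    exact ⟨G.connectedComponentMk v, rfl⟩

lemma mysrank_ge {V : Type*} [Fintype V] (G : SimpleGraph V) (S : Set V) (y x0 : V)
    (hy : y ∈ S) (hx0 : x0 ∉ S) (hiso : ∀ z ∈ S, ¬ G.Adj y z) :
    srank G S ≤ srank G ((S \ {y}) ∪ {x0}) := by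
  classical
  set T : Set V := (S \ {y}) ∪ {x0} with hT
  have hmem : ∀ w : ↥S, (w : V) ≠ y → (w : V) ∈ T := by
    intro w hw; exact Or.inl ⟨w.2, hw⟩
  have hx0T : x0 ∈ T := Or.inr rfl
  let f : ↥S → ↥T := fun w => if h : (w : V) = y then ⟨x0, hx0T⟩ else ⟨w, hmem w h⟩
  have hhom : ∀ a b : ↥S, (G.induce S).Adj a b → (G.induce T).Adj (f a) (f b) := by
    intro a b hab
    have hab' : G.Adj (a : V) (b : V) := hab
    have ha : (a : V) ≠ y := by rintro rfl; exact hiso b b.2 hab'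
    have hb : (b : V) ≠ y := by rintro rfl; exact hiso a a.2 hab'.symm
    simp only [f, dif_neg ha, dif_neg hb]
    exact hab'
  let φ : G.induce S →g G.induce T := ⟨f, fun {a b} h => hhom a b h⟩
  have hsurj : Function.Surjective f := by
    rintro ⟨t, ht⟩
    rcases ht with ⟨htS, hty⟩ | ht0
    · refine ⟨⟨t, htS⟩, ?_⟩
      simp only [f, dif_neg (by simpa using hty)]
    · refine ⟨⟨y, hy⟩, ?_⟩
      simp only [f, dif_pos rfl]
      exact Subtype.ext ht0.symm
  have hcard : Nat.card ↥T = Nat.card ↥S := by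
    rw [Nat.card_coe_set_eq, Nat.card_coe_set_eq]
    have h1 : T = insert x0 (S \ {y}) := by rw [hT, Set.union_singleton]
    rw [h1, Set.ncard_insert_of_notMem (fun h => hx0 h.1) ((Set.toFinite _)),
      Set.ncard_diff_singleton_of_mem hy]
    have : 1 ≤ S.ncard := (Set.ncard_pos (Set.toFinite S)).mpr ⟨y, hy⟩
    omega
  have hcomp := mycomp_le (G.induce S) (G.induce T) φ hsurj
  unfold srank grank
  rw [hcard]
  omega

theorem stmt10 {V : Type*} [Fintype V] (G : SimpleGraph V) (hconn : G.Connected)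
    (X : Set V) (hX : IsMinVertexCover G X) (l d : ℕ)
    (x0 : V) (hx0 : x0 ∈ X)
    (hpend : ∃ y : V, G.Adj x0 y ∧ ∀ z : V, G.Adj y z → z = x0)
    (Xs : Set V) (hXs : Xs ⊆ X) (Ys : Set V) (hYs : Ys ⊆ (Xᶜ : Set V))
    (h1 : _root_.IsVertexCover G ((X \ Xs) ∪ Ys))
    (h2 : l ≤ srank G ((X \ Xs) ∪ Ys))
    (h3 : (Nat.card Ys : ℤ) - (Nat.card Xs : ℤ) ≤ (l : ℤ) - (d : ℤ)) :
    ∃ Xs' ⊆ X, ∃ Ys' ⊆ (Xᶜ : Set V),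
      _root_.IsVertexCover G ((X \ Xs') ∪ Ys') ∧
      l ≤ srank G ((X \ Xs') ∪ Ys') ∧
      (Nat.card Ys' : ℤ) - (Nat.card Xs' : ℤ) ≤ (l : ℤ) - (d : ℤ) ∧
      x0 ∉ Xs' := by
  by_cases hcase : x0 ∈ Xs
  swap
  · exact ⟨Xs, hXs, Ys, hYs, h1, h2, h3, hcase⟩
  obtain ⟨y, hadj, hpy⟩ := hpend
  have hx0y : x0 ≠ y := G.ne_of_adj hadj
  -- y is not in X, since X is a minimum vertex cover
  have hyX : y ∉ X := by
    intro hyX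
    have hcov : _root_.IsVertexCover G (X \ {y}) := by
      intro u v huv
      rcases hX.1 huv with hu | hv
      · by_cases hu' : u = y
        · subst hu'
          right
          have hvx0 : v = x0 := hpy v huv
          exact ⟨hvx0 ▸ hx0, by simp [hvx0, hx0y]⟩
        · exact Or.inl ⟨hu, hu'⟩
      · by_cases hv' : v = y
        · subst hv'
          left
          have hux0 : u = x0 := hpy u huv.symm
          exact ⟨hux0 ▸ hx0, by simp [hux0, hx0y]⟩
        · exact Or.inr ⟨hv, hv'⟩
    have hle := hX.2 _ hcov
    rw [Nat.card_coe_set_eq, Nat.card_coe_set_eq,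
      Set.ncard_diff_singleton_of_mem hyX] at hle
    have hpos : 0 < X.ncard := (Set.ncard_pos (Set.toFinite X)).mpr ⟨y, hyX⟩
    omega
  set S : Set V := (X \ Xs) ∪ Ys with hS
  have hx0S : x0 ∉ S := by
    rintro (⟨-, h⟩ | h)
    · exact h hcase
    · exact hYs h hx0
  have hyS : y ∈ S := by
    rcases h1 hadj with h | h
    · exact absurd h hx0S
    · exact h
  have hyYs : y ∈ Ys := by
    rcases hyS with h | h
    · exact absurd h.1 hyX
    · exact h
  have hiso : ∀ z ∈ S, ¬ G.Adj y z := fun z hz hadj' => hx0S (hpy z hadj' ▸ hz)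
  refine ⟨Xs \ {x0}, Set.diff_subset.trans hXs, Ys \ {y}, Set.diff_subset.trans hYs,
    ?_, ?_, ?_, fun h => h.2 rfl⟩
  · -- vertex cover
    have key : ∀ u v : V, G.Adj u v → u ∈ S →
        u ∈ (X \ (Xs \ {x0})) ∪ (Ys \ {y}) ∨ v ∈ (X \ (Xs \ {x0})) ∪ (Ys \ {y}) := by
      intro u v huv hu
      rcases hu with hu | hu
      · exact Or.inl (Or.inl ⟨hu.1, fun h => hu.2 h.1⟩)
      · by_cases huy : u = y
        · subst huy
          have : v = x0 := hpy v huv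
          subst this
          exact Or.inr (Or.inl ⟨hx0, fun h => h.2 rfl⟩)
        · exact Or.inl (Or.inr ⟨hu, huy⟩)
    intro u v huv
    rcases h1 huv with hu | hv
    · exact key u v huv hu
    · exact (key v u huv.symm hv).symm
  · -- rank
    have hset : (X \ (Xs \ {x0})) ∪ (Ys \ {y}) = (S \ {y}) ∪ {x0} := by
      ext v
      simp only [hS, Set.mem_union, Set.mem_diff, Set.mem_singleton_iff]
      by_cases hv1 : v = x0
      · subst hv1; simp [hx0, hcase, hx0y]
      · by_cases hv2 : v = y
        · subst hv2; simp [hyX, hv1]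
        · simp [hv1, hv2]
    rw [hset]
    exact h2.trans (mysrank_ge G S y x0 hyS hx0S hiso)
  · -- cardinalities
    rw [Nat.card_coe_set_eq, Nat.card_coe_set_eq,
      Set.ncard_diff_singleton_of_mem hyYs, Set.ncard_diff_singleton_of_mem hcase]
    rw [Nat.card_coe_set_eq, Nat.card_coe_set_eq] at h3
    have hYpos : 0 < Ys.ncard := (Set.ncard_pos (Set.toFinite Ys)).mpr ⟨y, hyYs⟩
    have hXpos : 0 < Xs.ncard := (Set.ncard_pos (Set.toFinite Xs)).mpr ⟨x0, hcase⟩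
    omega
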